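/- For every n ≥ 5 there exists a K_{2,3}-saturated graph on n vertices with exactly 2n − 3 edges. -/

import Mathlib

open SimpleGraph

/-- `G` contains a subgraph isomorphic to the complete bipartite graph `K_{2,3}`. -/
def HasK23 {V : Type*} (G : SimpleGraph V) : Prop :=
  ∃ f : (Fin 2 ⊕ Fin 3) ↪ V,
    ∀ a b, (completeBipartiteGraph (Fin 2) (Fin 3)).Adj a b → G.Adj (f a) (f b)

/-- `G` is `K_{2,3}`-saturated: `K_{2,3}`-free, but adding any edge between two
non-adjacent vertices creates a `K_{2,3}`. -/
def K23Saturated {V : Type*} (G : SimpleGraph V) : Prop :=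
  ¬ HasK23 G ∧ ∀ u v : V, u ≠ v → ¬ G.Adj u v →
    HasK23 (G ⊔ SimpleGraph.fromEdgeSet {s(u, v)})

/-! ### Generic helpers -/

lemma hasK23_of {V : Type*} {G : SimpleGraph V} (a b c d e : V)
    (hab : a ≠ b) (hcd : c ≠ d) (hce : c ≠ e) (hde : d ≠ e)
    (hac : G.Adj a c) (had : G.Adj a d) (hae : G.Adj a e)
    (hbc : G.Adj b c) (hbd : G.Adj b d) (hbe : G.Adj b e) : HasK23 G := by
  have h1 := G.ne_of_adj hac
  have h2 := G.ne_of_adj had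
  have h3 := G.ne_of_adj hae
  have h4 := G.ne_of_adj hbc
  have h5 := G.ne_of_adj hbd
  have h6 := G.ne_of_adj hbe
  refine ⟨⟨Sum.elim ![a,b] ![c,d,e], ?_⟩, ?_⟩
  · intro x y hxy
    rcases x with x | x <;> rcases y with y | y <;>
      fin_cases x <;> fin_cases y <;> simp_all
  · intro x y hxy
    rcases x with x | x <;> rcases y with y | y <;>
      fin_cases x <;> fin_cases y <;> simp_all [completeBipartiteGraph, Function.Embedding.coeFn_mk] <;>
      first
      | exact hac.symm
      | exact had.symm
      | exact hae.symm
      | exact hbc.symm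
      | exact hbd.symm
      | exact hbe.symm
      | exact hac
      | exact had
      | exact hae
      | exact hbc
      | exact hbd
      | exact hbe

lemma noK23_of {V : Type*} {G : SimpleGraph V}
    (h : ∀ a b c d e : V, a ≠ b → c ≠ d → c ≠ e → d ≠ e →
      G.Adj a c → G.Adj a d → G.Adj a e → G.Adj b c → G.Adj b d → G.Adj b e → False) :
    ¬ HasK23 G := by
  rintro ⟨f, hf⟩
  have adj : ∀ (i : Fin 2) (j : Fin 3),
      G.Adj (f (Sum.inl i)) (f (Sum.inr j)) := by
    intro i j
    exact hf _ _ (by simp [completeBipartiteGraph])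
  exact h (f (Sum.inl 0)) (f (Sum.inl 1)) (f (Sum.inr 0)) (f (Sum.inr 1)) (f (Sum.inr 2))
    (by simp [f.injective.ne_iff]) (by simp [f.injective.ne_iff])
    (by simp [f.injective.ne_iff]) (by simp [f.injective.ne_iff])
    (adj 0 0) (adj 0 1) (adj 0 2) (adj 1 0) (adj 1 1) (adj 1 2)

lemma hasK23_iso {V W : Type*} {G : SimpleGraph V} {G' : SimpleGraph W} (e : G ≃g G')
    (h : HasK23 G) : HasK23 G' := by
  obtain ⟨f, hf⟩ := h
  exact ⟨⟨fun x => e (f x), fun x y hxy => f.injective (e.injective hxy)⟩,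
    fun a b hab => e.map_rel_iff.mpr (hf a b hab)⟩

lemma k23Saturated_iso {V W : Type*} {G : SimpleGraph V} {G' : SimpleGraph W} (e : G ≃g G')
    (h : K23Saturated G) : K23Saturated G' := by
  constructor
  · exact fun hh => h.1 (hasK23_iso e.symm hh)
  · intro u v huv hadj
    have h2 := h.2 (e.symm u) (e.symm v)
      (fun hh => huv (by simpa using congrArg e hh))
      (fun hh => hadj (e.symm.map_rel_iff.mp hh))
    refine hasK23_iso ?_ h2
    refine ⟨e.toEquiv, ?_⟩
    intro a b
    simp only [sup_adj, fromEdgeSet_adj, Set.mem_singleton_iff, Sym2.eq_iff, RelIso.coe_fn_toEquiv]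
    constructor
    · rintro (hh | ⟨(⟨rfl, rfl⟩ | ⟨rfl, rfl⟩), hne⟩)
      · exact Or.inl (e.map_rel_iff.mp hh)
      · exact Or.inr ⟨Or.inl ⟨by simp, by simp⟩, fun hh => hne (by rw [hh])⟩
      · exact Or.inr ⟨Or.inr ⟨by simp, by simp⟩, fun hh => hne (by rw [hh])⟩
    · rintro (hh | ⟨(⟨rfl, rfl⟩ | ⟨rfl, rfl⟩), hne⟩)
      · exact Or.inl (e.map_rel_iff.mpr hh)
      · exact Or.inr ⟨Or.inl ⟨by simp, by simp⟩, fun hh => hne (e.toEquiv.injective hh)⟩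
      · exact Or.inr ⟨Or.inr ⟨by simp, by simp⟩, fun hh => hne (e.toEquiv.injective hh)⟩

lemma ncard_iso {V W : Type*} {G : SimpleGraph V} {G' : SimpleGraph W} (e : G ≃g G') :
    G.edgeSet.ncard = G'.edgeSet.ncard := by
  rw [← Nat.card_coe_set_eq, ← Nat.card_coe_set_eq]
  exact Nat.card_congr e.mapEdgeSet

lemma ncard_edgeSet {V : Type*} [Fintype V] [DecidableEq V] (G : SimpleGraph V)
    [DecidableRel G.Adj] : G.edgeSet.ncard = G.edgeFinset.card := by
  rw [Set.ncard_eq_toFinset_card']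
  simp [edgeFinset]

/-! ### The generic construction: hub + isolated vertex + cycle `C_m` -/

def gmAdj (m : ℕ) : Option (Option (ZMod m)) → Option (Option (ZMod m)) → Prop
  | none, none => False
  | none, some _ => True
  | some _, none => True
  | some none, some _ => False
  | some (some _), some none => False
  | some (some i), some (some j) => i ≠ j ∧ (i + 1 = j ∨ j + 1 = i)

def Gm (m : ℕ) : SimpleGraph (Option (Option (ZMod m))) where
  Adj := gmAdj m
  symm := by
    constructor
    rintro (_ | (_ | i)) (_ | (_ | j)) h <;> simp only [gmAdj] at h ⊢ <;> tauto
  loopless := by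
    constructor
    rintro (_ | (_ | i)) h <;> simp only [gmAdj] at h <;> tauto

instance (m : ℕ) : DecidableRel (Gm m).Adj := fun a b => by
  rcases a with _ | _ | i <;> rcases b with _ | _ | j <;>
    dsimp only [Gm, gmAdj] <;> infer_instance

/-- shorthand for cycle vertices -/
def cs {m : ℕ} (i : ZMod m) : Option (Option (ZMod m)) := some (some i)

lemma three_nbrs {m : ℕ} {i : ZMod m} {v} (h : (Gm m).Adj (cs i) v) :
    v = none ∨ v = cs (i + 1) ∨ v = cs (i - 1) := by
  rcases v with _ | _ | j
  · exact Or.inl rfl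
  · exact absurd h (by simp [Gm, gmAdj, cs])
  · obtain ⟨hne, h1 | h1⟩ := h
    · exact Or.inr (Or.inl (by unfold cs; rw [h1]))
    · exact Or.inr (Or.inr (by unfold cs; rw [eq_sub_of_add_eq h1]))

section
variable {m : ℕ} (hm : 3 ≤ m) (hm4 : m ≠ 4)

lemma zmod_cast_ne_zero (k : ℕ) (hk : 0 < k) (hkm : ¬ m ∣ k) : (k : ZMod m) ≠ 0 := by
  rw [Ne, CharP.cast_eq_zero_iff (ZMod m) m k]
  exact hkm

include hm in
lemma zmod1 : (1 : ZMod m) ≠ 0 := by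
  have := zmod_cast_ne_zero (m := m) 1 (by norm_num)
    (fun h => by have := Nat.le_of_dvd one_pos h; omega)
  simpa using this

include hm in
lemma zmod2 : (2 : ZMod m) ≠ 0 := by
  have := zmod_cast_ne_zero (m := m) 2 (by norm_num)
    (fun h => by have := Nat.le_of_dvd two_pos h; omega)
  simpa using this

include hm hm4 in
lemma zmod4 : (4 : ZMod m) ≠ 0 := by
  have := zmod_cast_ne_zero (m := m) 4 (by norm_num)
    (fun h => by have := Nat.le_of_dvd four_pos h; interval_cases m <;> omega)
  simpa using this

include hm hm4 in
lemma core2 {i : ZMod m} {b : Option (Option (ZMod m))} (hbn : b ≠ none)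
    (hb : b ≠ cs i)
    (h1 : (Gm m).Adj b (cs (i + 1))) (h2 : (Gm m).Adj b (cs (i - 1))) : False := by
  rcases b with _ | _ | j
  · exact hbn rfl
  · exact h1.elim
  · obtain ⟨hne1, ha1 | ha1⟩ := h1
    · exact hb (by rw [cs, show j = i from by linear_combination ha1])
    · obtain ⟨hne2, ha2 | ha2⟩ := h2
      · exact zmod4 hm hm4 (by linear_combination ha1 + ha2)
      · exact hb (by rw [cs, show j = i from by linear_combination -ha2])

include hm hm4 in
lemma core (i : ZMod m) (b c d e : Option (Option (ZMod m)))
    (hab : cs i ≠ b) (hcd : c ≠ d) (hce : c ≠ e) (hde : d ≠ e)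
    (hac : (Gm m).Adj (cs i) c) (had : (Gm m).Adj (cs i) d) (hae : (Gm m).Adj (cs i) e)
    (hbc : (Gm m).Adj b c) (hbd : (Gm m).Adj b d) (hbe : (Gm m).Adj b e) : False := by
  have h2 : (2 : ZMod m) ≠ 0 := zmod2 hm
  have hpm : cs (m := m) (i + 1) ≠ cs (i - 1) := by
    unfold cs
    intro h
    rw [Option.some.injEq, Option.some.injEq] at h
    exact h2 (by linear_combination h)
  rcases three_nbrs hac with rfl | rfl | rfl <;>
    rcases three_nbrs had with rfl | rfl | rfl <;>
      rcases three_nbrs hae with rfl | rfl | rfl <;>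
        first
        | exact hcd rfl
        | exact hce rfl
        | exact hde rfl
        | exact absurd rfl hpm
        | exact core2 hm hm4 ((Gm m).ne_of_adj hbc) hab.symm hbd hbe
        | exact core2 hm hm4 ((Gm m).ne_of_adj hbc) hab.symm hbe hbd
        | exact core2 hm hm4 ((Gm m).ne_of_adj hbd) hab.symm hbc hbe
        | exact core2 hm hm4 ((Gm m).ne_of_adj hbd) hab.symm hbe hbc
        | exact core2 hm hm4 ((Gm m).ne_of_adj hbe) hab.symm hbc hbd
        | exact core2 hm hm4 ((Gm m).ne_of_adj hbe) hab.symm hbd hbc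

include hm hm4 in
lemma free_core (a b c d e : Option (Option (ZMod m)))
    (hab : a ≠ b) (hcd : c ≠ d) (hce : c ≠ e) (hde : d ≠ e)
    (hac : (Gm m).Adj a c) (had : (Gm m).Adj a d) (hae : (Gm m).Adj a e)
    (hbc : (Gm m).Adj b c) (hbd : (Gm m).Adj b d) (hbe : (Gm m).Adj b e) : False := by
  rcases a with _ | _ | i
  · rcases b with _ | _ | j
    · exact hab rfl
    · rcases c with _ | _ | _
      · exact hac.elim
      · exact hbc.elim
      · exact hbc.elim
    · exact core hm hm4 j none c d e (by simp [cs]) hcd hce hde hbc hbd hbe hac had hae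
  · rcases c with _ | _ | _
    · rcases d with _ | _ | _
      · exact hcd rfl
      · exact had.elim
      · exact had.elim
    · exact hac.elim
    · exact hac.elim
  · exact core hm hm4 i b c d e hab hcd hce hde hac had hae hbc hbd hbe

lemma adj_none {m : ℕ} {v : Option (Option (ZMod m))} (hv : v ≠ none) :
    (Gm m).Adj none v := by
  rcases v with _ | _ | j
  · exact (hv rfl).elim
  · trivial
  · trivial

include hm in
lemma sat_core (u : Option (Option (ZMod m))) (i : ZMod m)
    (hun : u ≠ none) (hne : u ≠ cs i) (hnadj : ¬ (Gm m).Adj u (cs i)) :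
    HasK23 ((Gm m) ⊔ SimpleGraph.fromEdgeSet {s(u, cs i)}) := by
  have h1 : (1 : ZMod m) ≠ 0 := zmod1 hm
  have h2 : (2 : ZMod m) ≠ 0 := zmod2 hm
  have hip : (Gm m).Adj (cs (i + 1)) (cs i) := by
    refine ⟨fun h => h1 (by linear_combination h), Or.inr rfl⟩
  have him : (Gm m).Adj (cs (i - 1)) (cs i) := by
    refine ⟨fun h => h1 (by linear_combination -h), Or.inl (sub_add_cancel i 1)⟩
  apply hasK23_of none (cs i) u (cs (i + 1)) (cs (i - 1))
  · simp [cs]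
  · intro h; exact hnadj (h ▸ hip)
  · intro h; exact hnadj (h ▸ him)
  · intro h
    rw [cs, cs, Option.some.injEq, Option.some.injEq] at h
    exact h2 (by linear_combination h)
  · exact Or.inl (adj_none hun)
  · exact Or.inl (adj_none (by simp [cs]))
  · exact Or.inl (adj_none (by simp [cs]))
  · exact Or.inr ((fromEdgeSet_adj _).mpr
      ⟨by rw [Set.mem_singleton_iff]; exact Sym2.eq_swap, hne.symm⟩)
  · exact Or.inl hip.symm
  · exact Or.inl him.symm

include hm in
lemma sat_main (u v : Option (Option (ZMod m))) (huv : u ≠ v) (hnadj : ¬ (Gm m).Adj u v) :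
    HasK23 ((Gm m) ⊔ SimpleGraph.fromEdgeSet {s(u, v)}) := by
  have hun : u ≠ none := by rintro rfl; exact hnadj (adj_none (Ne.symm huv))
  have hvn : v ≠ none := by rintro rfl; exact hnadj ((adj_none hun).symm)
  rcases v with _ | _ | i
  · exact (hvn rfl).elim
  · rcases u with _ | _ | j
    · exact (hun rfl).elim
    · exact (huv rfl).elim
    · have hset : ({s(some (some j), some none)} :
          Set (Sym2 (Option (Option (ZMod m))))) = {s(some none, some (some j))} := by
        rw [Sym2.eq_swap]
      rw [hset]
      exact sat_core hm (some none) j (by simp) (by simp [cs])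
        (fun h => hnadj ((show (Gm m).Adj (some none) (cs j) from h).symm))
  · exact sat_core hm u i hun huv hnadj

end

/-! ### Counting edges of `Gm` -/

section
variable {m : ℕ} [NeZero m]

lemma card_Vm : Fintype.card (Option (Option (ZMod m))) = m + 2 := by
  simp [ZMod.card]

lemma deg_none : (Gm m).degree none = m + 1 := by
  have h : (Gm m).neighborFinset none = Finset.univ.erase none := by
    ext v
    rcases v with _ | _ | j <;> rw [mem_neighborFinset] <;>
      simp [mem_neighborFinset, Gm, gmAdj]
  rw [degree, h, Finset.card_erase_of_mem (Finset.mem_univ _), Finset.card_univ, card_Vm]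
  omega

lemma deg_x : (Gm m).degree (some none) = 1 := by
  have h : (Gm m).neighborFinset (some none) = {none} := by
    ext v
    rcases v with _ | _ | j <;> rw [mem_neighborFinset] <;>
      simp [mem_neighborFinset, Gm, gmAdj]
  rw [degree, h, Finset.card_singleton]

lemma deg_cs (hm : 3 ≤ m) (i : ZMod m) : (Gm m).degree (some (some i)) = 3 := by
  have h1 : (1 : ZMod m) ≠ 0 := zmod1 hm
  have h2 : (2 : ZMod m) ≠ 0 := zmod2 hm
  have h : (Gm m).neighborFinset (some (some i)) = {none, cs (i + 1), cs (i - 1)} := by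
    ext v
    rw [mem_neighborFinset]
    constructor
    · intro h
      rcases three_nbrs h with rfl | rfl | rfl <;> simp
    · intro h
      rcases Finset.mem_insert.mp h with rfl | h
      · trivial
      · rcases Finset.mem_insert.mp h with rfl | h
        · exact ⟨fun hh => h1 (by linear_combination -hh), Or.inl rfl⟩
        · rw [Finset.mem_singleton] at h
          subst h
          exact ⟨fun hh => h1 (by linear_combination hh), Or.inr (sub_add_cancel i 1)⟩
  rw [degree, h]
  rw [Finset.card_insert_of_notMem (by simp [cs]),
    Finset.card_insert_of_notMem (by
      rw [Finset.mem_singleton]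
      unfold cs
      intro hh
      rw [Option.some.injEq, Option.some.injEq] at hh
      exact h2 (by linear_combination hh)),
    Finset.card_singleton]

lemma count_Gm (hm : 3 ≤ m) : (Gm m).edgeFinset.card = 2 * m + 1 := by
  have hsum := (Gm m).sum_degrees_eq_twice_card_edges
  rw [Fintype.sum_option, Fintype.sum_option, deg_none, deg_x] at hsum
  have hc : ∀ i : ZMod m, (Gm m).degree (some (some i)) = 3 := deg_cs hm
  rw [Finset.sum_congr rfl (fun i _ => hc i), Finset.sum_const, Finset.card_univ,
    ZMod.card, smul_eq_mul] at hsum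
  omega

end

/-! ### n = 6 : hub + (triangle ∪ edge) -/

def g6adj : Fin 6 → Fin 6 → Bool := fun a b =>
  a ≠ b && (a = 0 || b = 0 ||
    (a ∈ ({1,2,3} : List (Fin 6)) && b ∈ ({1,2,3} : List (Fin 6))) ||
    (a ∈ ({4,5} : List (Fin 6)) && b ∈ ({4,5} : List (Fin 6))))

def G6 : SimpleGraph (Fin 6) where
  Adj a b := g6adj a b
  symm := by
    have h : ∀ a b : Fin 6, g6adj a b → g6adj b a := by decide
    exact ⟨fun a b hab => h a b hab⟩
  loopless := by
    have h : ∀ a : Fin 6, ¬ g6adj a a := by decide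
    exact ⟨fun a hab => h a hab⟩

instance : DecidableRel G6.Adj := fun a b => inferInstanceAs (Decidable (g6adj a b = true))

lemma free6 : ∀ a b c d e : Fin 6, a ≠ b → c ≠ d → c ≠ e → d ≠ e →
    G6.Adj a c → G6.Adj a d → G6.Adj a e → G6.Adj b c → G6.Adj b d → G6.Adj b e → False := by
  decide

lemma deg6 : ∑ v, G6.degree v = 2 * 9 := by decide

lemma sat6 {u v : Fin 6} (p q : Fin 6) (huv : u ≠ v)
    (h1 : (0 : Fin 6) ≠ u) (hpq : p ≠ q) (hpv : p ≠ v) (hqv : q ≠ v)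
    (h2 : G6.Adj 0 p) (h3 : G6.Adj 0 q) (h4 : G6.Adj 0 v)
    (h5 : G6.Adj u p) (h6 : G6.Adj u q) :
    HasK23 (G6 ⊔ SimpleGraph.fromEdgeSet {s(u, v)}) :=
  hasK23_of 0 u p q v h1 hpq hpv hqv (Or.inl h2) (Or.inl h3) (Or.inl h4)
    (Or.inl h5) (Or.inl h6)
    (Or.inr ((fromEdgeSet_adj _).mpr ⟨Set.mem_singleton _, huv⟩))

lemma sat6' {u v : Fin 6} (p q : Fin 6) (huv : u ≠ v)
    (h1 : (0 : Fin 6) ≠ v) (hpq : p ≠ q) (hpu : p ≠ u) (hqu : q ≠ u)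
    (h2 : G6.Adj 0 p) (h3 : G6.Adj 0 q) (h4 : G6.Adj 0 u)
    (h5 : G6.Adj v p) (h6 : G6.Adj v q) :
    HasK23 (G6 ⊔ SimpleGraph.fromEdgeSet {s(u, v)}) :=
  hasK23_of 0 v p q u h1 hpq hpu hqu (Or.inl h2) (Or.inl h3) (Or.inl h4)
    (Or.inl h5) (Or.inl h6)
    (Or.inr ((fromEdgeSet_adj _).mpr
      ⟨by rw [Set.mem_singleton_iff]; exact Sym2.eq_swap, huv.symm⟩))

lemma sat6_main (u v : Fin 6) (huv : u ≠ v) (hnadj : ¬ G6.Adj u v) :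
    HasK23 (G6 ⊔ SimpleGraph.fromEdgeSet {s(u, v)}) := by
  fin_cases u <;> fin_cases v <;>
    first
    | exact absurd rfl huv
    | exact absurd (by decide) hnadj
    | exact sat6 2 3 huv (by decide) (by decide) (by decide) (by decide) (by decide)
        (by decide) (by decide) (by decide) (by decide)
    | exact sat6 1 3 huv (by decide) (by decide) (by decide) (by decide) (by decide)
        (by decide) (by decide) (by decide) (by decide)
    | exact sat6 1 2 huv (by decide) (by decide) (by decide) (by decide) (by decide)
        (by decide) (by decide) (by decide) (by decide)
    | exact sat6' 2 3 huv (by decide) (by decide) (by decide) (by decide) (by decide)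
        (by decide) (by decide) (by decide) (by decide)
    | exact sat6' 1 3 huv (by decide) (by decide) (by decide) (by decide) (by decide)
        (by decide) (by decide) (by decide) (by decide)
    | exact sat6' 1 2 huv (by decide) (by decide) (by decide) (by decide) (by decide)
        (by decide) (by decide) (by decide) (by decide)

lemma count_G6 : G6.edgeFinset.card = 9 := by
  have hsum := G6.sum_degrees_eq_twice_card_edges
  rw [deg6] at hsum
  omega

/-! ### Main theorem -/


theorem sat_K23_upper_bound (n : ℕ) (hn : 5 ≤ n) :
    ∃ G : SimpleGraph (Fin n), K23Saturated G ∧ G.edgeSet.ncard = 2 * n - 3 := by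
  rcases eq_or_ne n 6 with rfl | hn6
  · exact ⟨G6, ⟨noK23_of free6, sat6_main⟩, by rw [ncard_edgeSet, count_G6]⟩
  · set m := n - 2 with hm_def
    have hm : 3 ≤ m := by omega
    have hm4 : m ≠ 4 := by omega
    haveI : NeZero m := ⟨by omega⟩
    have hcard : Fintype.card (Option (Option (ZMod m))) = n := by
      rw [card_Vm]; omega
    obtain e : Fin n ≃ Option (Option (ZMod m)) :=
      (Fintype.equivFinOfCardEq hcard).symm
    have iso : (Gm m).comap e.toEmbedding ≃g Gm m := SimpleGraph.Iso.comap e (Gm m)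
    refine ⟨(Gm m).comap e.toEmbedding, k23Saturated_iso iso.symm
      ⟨noK23_of (free_core hm hm4), sat_main hm⟩, ?_⟩
    rw [ncard_iso iso, ncard_edgeSet, count_Gm hm]
    omega
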